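/- Let b ⊆ q be nonzero fractional ideals of a number field F with b | q. For any x generating b/q as an O-module (O the ring of integers), there exists a unique class y ∈ b⁻¹/(q b⁻²) generating b⁻¹/(q b⁻²) as an O-module such that x·y ∈ 1 + q b⁻¹. -/

import Mathlib

open NumberField

/-- Definition 2.1 (paper): for fractional ideals `q ⊆ b` of a number field and a generator `x`
of the `𝒪`-module `b/q`, there is a unique class `y ∈ (b⁻¹/(q b⁻²))ˣ` with `x y ∈ 1 + q b⁻¹`.
"`x` generates `b/q`" is formalized as `b ⊆ span {x} + q`, and similarly for `y`. -/
theorem stmt_13 (F : Type*) [Field F] [NumberField F]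
    (b q : FractionalIdeal (nonZeroDivisors (RingOfIntegers F)) F)
    (hb : b ≠ 0) (hq : q ≠ 0) (hqb : q ≤ b) (x : F) (hx : x ∈ b)
    (hxgen : (b : Submodule (RingOfIntegers F) F) ≤
      Submodule.span (RingOfIntegers F) {x} ⊔ (q : Submodule (RingOfIntegers F) F)) :
    ∃ y : F,
      (y ∈ b⁻¹ ∧
        ((b⁻¹ : FractionalIdeal (nonZeroDivisors (RingOfIntegers F)) F) :
            Submodule (RingOfIntegers F) F) ≤
          Submodule.span (RingOfIntegers F) {y} ⊔
            ((q * b⁻¹ * b⁻¹ : FractionalIdeal (nonZeroDivisors (RingOfIntegers F)) F) :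
              Submodule (RingOfIntegers F) F) ∧
        x * y - 1 ∈ q * b⁻¹) ∧
      ∀ y' : F,
        (y' ∈ b⁻¹ ∧
          ((b⁻¹ : FractionalIdeal (nonZeroDivisors (RingOfIntegers F)) F) :
              Submodule (RingOfIntegers F) F) ≤
            Submodule.span (RingOfIntegers F) {y'} ⊔
              ((q * b⁻¹ * b⁻¹ : FractionalIdeal (nonZeroDivisors (RingOfIntegers F)) F) :
                Submodule (RingOfIntegers F) F) ∧
          x * y' - 1 ∈ q * b⁻¹) →
        y - y' ∈ q * b⁻¹ * b⁻¹ := by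
  classical
  set R := RingOfIntegers F
  have negmem : ∀ (I : FractionalIdeal (nonZeroDivisors R) F) (a : F), a ∈ I → -a ∈ I := by
    intro I a h
    rw [← FractionalIdeal.mem_coe] at h ⊢
    exact neg_mem h
  have submem : ∀ (I : FractionalIdeal (nonZeroDivisors R) F) (a c : F),
      a ∈ I → c ∈ I → a - c ∈ I := by
    intro I a c h h'
    rw [← FractionalIdeal.mem_coe] at h h' ⊢
    exact sub_mem h h'
  have hbb : b * b⁻¹ = 1 := mul_inv_cancel₀ hb
  -- b ≤ spanSingleton x + q as fractional ideals
  have hgen : b ≤ FractionalIdeal.spanSingleton (nonZeroDivisors R) x + q := by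
    rw [← FractionalIdeal.sup_eq_add, ← FractionalIdeal.coe_le_coe]
    rw [FractionalIdeal.coe_sup, FractionalIdeal.coe_spanSingleton]; exact hxgen
  have hone : (1 : FractionalIdeal (nonZeroDivisors R) F) ≤
      FractionalIdeal.spanSingleton (nonZeroDivisors R) x * b⁻¹ + q * b⁻¹ := by
    rw [← add_mul, ← hbb]
    exact mul_left_mono hgen
  have h1mem : (1 : F) ∈
      FractionalIdeal.spanSingleton (nonZeroDivisors R) x * b⁻¹ + q * b⁻¹ :=
    hone (FractionalIdeal.one_mem_one _)
  rw [← FractionalIdeal.sup_eq_add] at h1mem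
  rw [← FractionalIdeal.mem_coe, FractionalIdeal.coe_sup] at h1mem
  obtain ⟨s, hs, z, hz, hsz⟩ := Submodule.mem_sup.mp h1mem
  rw [FractionalIdeal.mem_coe] at hs hz
  obtain ⟨y, hy, rfl⟩ := FractionalIdeal.mem_singleton_mul.mp hs
  refine ⟨y, ⟨hy, ?_, ?_⟩, ?_⟩
  · -- generation
    intro w hw
    rw [FractionalIdeal.mem_coe] at hw
    have hwx : w * x ∈ (1 : FractionalIdeal (nonZeroDivisors R) F) := by
      rw [← hbb, mul_comm b]
      exact FractionalIdeal.mul_mem_mul hw hx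
    obtain ⟨a, ha⟩ := FractionalIdeal.mem_one_iff _ |>.mp hwx
    have hterm : w * (x * y - 1) ∈ q * b⁻¹ * b⁻¹ := by
      have : (x * y - 1 : F) ∈ q * b⁻¹ := by
        have : x * y - 1 = -z := by rw [← hsz]; ring
        rw [this]; exact negmem _ _ hz
      have h2 := FractionalIdeal.mul_mem_mul this hw
      have heq : q * b⁻¹ * b⁻¹ = q * b⁻¹ * b⁻¹ := rfl
      have : w * (x * y - 1) = (x * y - 1) * w := by ring
      rw [this]
      have hcomm : (q * b⁻¹) * b⁻¹ = q * b⁻¹ * b⁻¹ := rfl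
      exact h2
    refine Submodule.mem_sup.mpr ⟨a • y, ?_, -(w * (x * y - 1)), ?_, ?_⟩
    · exact Submodule.smul_mem _ _ (Submodule.mem_span_singleton_self y)
    · rw [FractionalIdeal.mem_coe]
      exact negmem _ _ hterm
    · have hay : a • y = w * x * y := by
        rw [Algebra.smul_def, ha]
      rw [hay]; ring
  · -- congruence
    have : x * y - 1 = -z := by rw [← hsz]; ring
    rw [this]; exact negmem _ _ hz
  · -- uniqueness
    rintro y' ⟨hy', -, hc'⟩
    have hc : x * y - 1 ∈ q * b⁻¹ := by
      have : x * y - 1 = -z := by rw [← hsz]; ring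
      rw [this]; exact negmem _ _ hz
    have h1 : y' * (x * y - 1) ∈ q * b⁻¹ * b⁻¹ := by
      have h := FractionalIdeal.mul_mem_mul hc hy'
      have : y' * (x * y - 1) = (x * y - 1) * y' := by ring
      rw [this]; exact h
    have h2 : y * (x * y' - 1) ∈ q * b⁻¹ * b⁻¹ := by
      have h := FractionalIdeal.mul_mem_mul hc' hy
      have : y * (x * y' - 1) = (x * y' - 1) * y := by ring
      rw [this]; exact h
    have : y - y' = y' * (x * y - 1) - y * (x * y' - 1) := by ring
    rw [this]; exact submem _ _ _ h1 h2
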